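/- Let q be a prime power, let Δ be a simplicial complex on vertex set {1,…,ℓ} containing every singleton, and let G be its underlying graph (the simple graph on {1,…,ℓ} whose edges are the 2-element faces of Δ). Then for every nonnegative integer k, the integer χ(S_Δ^q, q^k) is divisible by (q−1)^ℓ, and the quotient χ(S_Δ^q, q^k)/(q−1)^ℓ is congruent to P(G,k) modulo q−1. -/

import Mathlib

open Finset
open scoped Classical

/-- The characteristic polynomial of a finite set of (hyper)planes, evaluated at an
integer `t`:  `χ(A,t) = Σ_{I ⊆ A} (−1)^{|I|} t^{dim ∩_{H ∈ I} H}`, the empty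
intersection being the whole space. -/
noncomputable def chi {K V : Type} [Field K] [Fintype V]
    (A : Finset (Submodule K (V → K))) (t : ℤ) : ℤ :=
  ∑ I ∈ A.powerset, (-1) ^ I.card * t ^ (Module.finrank K ↥(I.inf id))
/-- The kernel of the linear form `x ↦ ∑ i, a i * x i`. -/
noncomputable def kerForm {K V : Type} [Field K] [Fintype V] (a : V → K) :
    Submodule K (V → K) :=
  LinearMap.ker (∑ i, a i • (LinearMap.proj i : (V → K) →ₗ[K] K))

/-- The arrangement `S_Δ^q` attached to a simplicial complex with face set `𝓕`:
all hyperplanes `ker (a_{i₁} x_{i₁} + ⋯ + a_{i_r} x_{i_r})` where `{i₁, …, i_r}`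
runs over the nonempty faces and the `a`'s run over the nonzero field elements. -/
noncomputable def SArr (K : Type) [Field K] [Fintype K] {V : Type} [Fintype V]
    (𝓕 : Finset (Finset V)) : Finset (Submodule K (V → K)) :=
  (𝓕.filter fun s => s.Nonempty).biUnion fun s =>
    ((Finset.univ : Finset (V → K)).filter
      (fun a => ∀ i, (i ∈ s → a i ≠ 0) ∧ (i ∉ s → a i = 0))).image kerForm
/-- `nColorings G k` is the number of proper `k`-colorings of the graph `G`. -/
noncomputable def nColorings {V : Type} (G : SimpleGraph V) (k : ℕ) : ℕ :=
  Nat.card {f : V → Fin k // ∀ u w, G.Adj u w → f u ≠ f w}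

/-! ### Auxiliary development -/

set_option linter.unusedSectionVars false

/-- Each `y i` is supported on at most one coordinate. -/
def IsSimple {F : Type} [Zero F] {ℓ k : ℕ} (y : Fin ℓ → Fin k → F) : Prop :=
  ∀ i, ∃ j, ∀ j', y i j' ≠ 0 → j' = j

/-- The set of coefficient vectors whose support is a nonempty face. -/
noncomputable def coefSet (K : Type) [Field K] [Fintype K] {V : Type} [Fintype V]
    (𝓕 : Finset (Finset V)) : Finset (V → K) :=
  (𝓕.filter fun s => s.Nonempty).biUnion fun s =>
    ((Finset.univ : Finset (V → K)).filter
      (fun a => ∀ i, (i ∈ s → a i ≠ 0) ∧ (i ∉ s → a i = 0)))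

section Aux

variable {ℓ k : ℕ} (F : Type) [Field F] [Fintype F]


/-- `y` avoids all the hyperplanes of the arrangement (after extension of scalars). -/
def IsGood (𝓕 : Finset (Finset (Fin ℓ))) (y : Fin ℓ → Fin k → F) : Prop :=
  ∀ a ∈ coefSet F 𝓕, (∑ i, a i • y i) ≠ 0

lemma SArr_eq (𝓕 : Finset (Finset (Fin ℓ))) :
    SArr F 𝓕 = (coefSet F 𝓕).image kerForm := by
  ext H
  rw [SArr, coefSet, Finset.mem_biUnion, Finset.mem_image]
  constructor
  · rintro ⟨s, hs, hH⟩
    obtain ⟨a, ha, rfl⟩ := Finset.mem_image.mp hH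
    exact ⟨a, Finset.mem_biUnion.mpr ⟨s, hs, ha⟩, rfl⟩
  · rintro ⟨a, ha, rfl⟩
    obtain ⟨s, hs, ha'⟩ := Finset.mem_biUnion.mp ha
    exact ⟨s, hs, Finset.mem_image_of_mem _ ha'⟩

lemma mem_kerForm (a x : Fin ℓ → F) :
    x ∈ kerForm a ↔ (∑ i, a i * x i) = 0 := by
  simp [kerForm, LinearMap.mem_ker, LinearMap.sum_apply, LinearMap.smul_apply,
    LinearMap.proj_apply, smul_eq_mul]

lemma mem_coefSet_iff {𝓕 : Finset (Finset (Fin ℓ))} {a : Fin ℓ → F} :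
    a ∈ coefSet F 𝓕 ↔
      ∃ s, (s ∈ 𝓕 ∧ s.Nonempty) ∧ ∀ i, (i ∈ s → a i ≠ 0) ∧ (i ∉ s → a i = 0) := by
  simp only [coefSet, Finset.mem_biUnion, Finset.mem_filter, Finset.mem_univ, true_and]

lemma mem_coefSet_of {𝓕 : Finset (Finset (Fin ℓ))} {s : Finset (Fin ℓ)}
    (hs𝓕 : s ∈ 𝓕) (hsne : s.Nonempty) {a : Fin ℓ → F}
    (ha : ∀ i, (i ∈ s → a i ≠ 0) ∧ (i ∉ s → a i = 0)) : a ∈ coefSet F 𝓕 :=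
  (mem_coefSet_iff F).mpr ⟨s, ⟨hs𝓕, hsne⟩, ha⟩

lemma exists_of_mem_coefSet {𝓕 : Finset (Finset (Fin ℓ))} {a : Fin ℓ → F}
    (ha : a ∈ coefSet F 𝓕) :
    ∃ s ∈ 𝓕, s.Nonempty ∧ ∀ i, (i ∈ s → a i ≠ 0) ∧ (i ∉ s → a i = 0) := by
  obtain ⟨s, hs, ha⟩ := (mem_coefSet_iff F).mp ha
  exact ⟨s, hs.1, hs.2, ha⟩

lemma whitney (𝓕 : Finset (Finset (Fin ℓ))) :
    chi (SArr F 𝓕) ((Fintype.card F : ℤ) ^ k) =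
      ((Finset.univ.filter fun y : Fin ℓ → Fin k → F => IsGood F 𝓕 y).card : ℤ) := by
  have hcard : ∀ W : Submodule F (Fin ℓ → F),
      ((Fintype.card F : ℤ) ^ k) ^ (Module.finrank F W)
        = ((Finset.univ.filter fun x : Fin k → Fin ℓ → F => ∀ j, x j ∈ W).card : ℤ) := by
    intro W
    have e : {x : Fin k → Fin ℓ → F // ∀ j, x j ∈ W} ≃ (Fin k → W) :=
      { toFun := fun x j => ⟨x.1 j, x.2 j⟩
        invFun := fun v => ⟨fun j => v j, fun j => (v j).2⟩
        left_inv := fun x => rfl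
        right_inv := fun v => rfl }
    have h1 : (Finset.univ.filter fun x : Fin k → Fin ℓ → F => ∀ j, x j ∈ W).card
        = Fintype.card F ^ (Module.finrank F W * k) := by
      rw [← Fintype.card_subtype, Fintype.card_congr e, Fintype.card_fun, Fintype.card_fin,
        Module.card_eq_pow_finrank (K := F) (V := W), ← pow_mul]
    rw [h1]
    push_cast
    rw [← pow_mul, Nat.mul_comm]
  rw [chi]
  have step1 : ∀ I ∈ (SArr F 𝓕).powerset,
      (-1 : ℤ) ^ I.card * ((Fintype.card F : ℤ) ^ k) ^ (Module.finrank F ↥(I.inf id))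
        = ∑ x : Fin k → Fin ℓ → F,
            (-1 : ℤ) ^ I.card * (if (∀ j, x j ∈ I.inf id) then 1 else 0) := by
    intro I _
    rw [hcard, Finset.card_filter]
    push_cast
    rw [Finset.mul_sum]
  refine Eq.trans (Finset.sum_congr rfl step1) ?_
  rw [Finset.sum_comm]
  have key : ∀ x : Fin k → Fin ℓ → F,
      (∑ I ∈ (SArr F 𝓕).powerset,
          (-1 : ℤ) ^ I.card * (if (∀ j, x j ∈ I.inf id) then 1 else 0))
        = if (∀ a ∈ coefSet F 𝓕, ∃ j, x j ∉ kerForm a) then 1 else 0 := by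
    intro x
    set Ax := (SArr F 𝓕).filter (fun H => ∀ j, x j ∈ H) with hAx
    have hsub : ∀ I ∈ (SArr F 𝓕).powerset, ((∀ j, x j ∈ I.inf id) ↔ I ⊆ Ax) := by
      intro I hI
      rw [Finset.mem_powerset] at hI
      constructor
      · intro h H hH
        rw [hAx, Finset.mem_filter]
        exact ⟨hI hH, fun j => (Submodule.mem_finsetInf.mp (h j)) H hH⟩
      · intro h j
        rw [Submodule.mem_finsetInf]
        intro H hH
        exact (Finset.mem_filter.mp (h hH)).2 j
    calc (∑ I ∈ (SArr F 𝓕).powerset,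
            (-1 : ℤ) ^ I.card * (if (∀ j, x j ∈ I.inf id) then 1 else 0))
        = ∑ I ∈ (SArr F 𝓕).powerset, (if I ⊆ Ax then (-1 : ℤ) ^ I.card else 0) := by
          refine Finset.sum_congr rfl fun I hI => ?_
          rw [mul_ite, mul_one, mul_zero, if_congr (hsub I hI) rfl rfl]
      _ = ∑ I ∈ (SArr F 𝓕).powerset.filter (· ⊆ Ax), (-1 : ℤ) ^ I.card :=
          (Finset.sum_filter _ _).symm
      _ = ∑ I ∈ Ax.powerset, (-1 : ℤ) ^ I.card := by
          congr 1
          ext I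
          simp only [Finset.mem_filter, Finset.mem_powerset]
          constructor
          · exact fun h => h.2
          · exact fun h => ⟨h.trans (Finset.filter_subset _ _), h⟩
      _ = if Ax = ∅ then 1 else 0 := Finset.sum_powerset_neg_one_pow_card
      _ = if (∀ a ∈ coefSet F 𝓕, ∃ j, x j ∉ kerForm a) then 1 else 0 := by
          refine if_congr ?_ rfl rfl
          rw [hAx, Finset.filter_eq_empty_iff]
          constructor
          · intro h a ha
            have hmem : kerForm a ∈ SArr F 𝓕 := by
              rw [SArr_eq]; exact Finset.mem_image_of_mem _ ha
            by_contra hc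
            push_neg at hc
            exact h hmem (fun j => hc j)
          · intro h H hH
            rw [SArr_eq] at hH
            obtain ⟨a, ha, rfl⟩ := Finset.mem_image.mp hH
            obtain ⟨j, hj⟩ := h a ha
            exact fun hall => hj (hall j)
  refine Eq.trans (Finset.sum_congr rfl fun x _ => key x) ?_
  rw [Finset.sum_boole]
  norm_cast
  have hswap : ∀ x : Fin k → Fin ℓ → F,
      (∀ a ∈ coefSet F 𝓕, ∃ j, x j ∉ kerForm a) ↔ IsGood F 𝓕 (Function.swap x) := by
    intro x
    unfold IsGood
    refine forall₂_congr fun a ha => ?_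
    rw [Function.ne_iff]
    refine exists_congr fun j => ?_
    rw [mem_kerForm]
    simp [Finset.sum_apply, Function.swap]
  apply Finset.card_bij (fun (x : Fin k → Fin ℓ → F) _ => Function.swap x)
  · intro x hx
    rw [Finset.mem_filter] at hx ⊢
    exact ⟨Finset.mem_univ _, (hswap x).mp hx.2⟩
  · intro x₁ _ x₂ _ h
    funext j i
    exact congrFun (congrFun h i) j
  · intro y hy
    rw [Finset.mem_filter] at hy
    refine ⟨Function.swap y, ?_, rfl⟩
    rw [Finset.mem_filter]
    exact ⟨Finset.mem_univ _, (hswap (Function.swap y)).mpr hy.2⟩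

lemma good_ne_zero {𝓕 : Finset (Finset (Fin ℓ))}
    (hsingle : ∀ i : Fin ℓ, ({i} : Finset (Fin ℓ)) ∈ 𝓕)
    {y : Fin ℓ → Fin k → F} (hy : IsGood F 𝓕 y) (i : Fin ℓ) : y i ≠ 0 := by
  intro h0
  have hmem : (Pi.single i (1 : F) : Fin ℓ → F) ∈ coefSet F 𝓕 := by
    refine mem_coefSet_of F (hsingle i) (Finset.singleton_nonempty i) (fun i' => ⟨?_, ?_⟩)
    · intro hi'
      rw [Finset.mem_singleton] at hi'
      subst hi'
      simp
    · intro hi'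
      rw [Finset.mem_singleton] at hi'
      simp [Pi.single_eq_of_ne hi']
  apply hy _ hmem
  rw [Finset.sum_eq_single i]
  · rw [Pi.single_eq_same, one_smul, h0]
  · intro b _ hb
    rw [Pi.single_eq_of_ne hb, zero_smul]
  · intro hnot
    exact absurd (Finset.mem_univ i) hnot

lemma count_simple (𝓕 : Finset (Finset (Fin ℓ)))
    (hdown : ∀ s ∈ 𝓕, ∀ t ⊆ s, t ∈ 𝓕)
    (hsingle : ∀ i : Fin ℓ, ({i} : Finset (Fin ℓ)) ∈ 𝓕)
    (G : SimpleGraph (Fin ℓ))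
    (hG : ∀ i j : Fin ℓ, G.Adj i j ↔ i ≠ j ∧ ({i, j} : Finset (Fin ℓ)) ∈ 𝓕) :
    (Finset.univ.filter fun y : Fin ℓ → Fin k → F =>
        IsGood F 𝓕 y ∧ IsSimple y).card
      = (Fintype.card F - 1) ^ ℓ * nColorings G k := by
  have hadj : ∀ {s : Finset (Fin ℓ)}, s ∈ 𝓕 → ∀ {u w : Fin ℓ},
      u ∈ s → w ∈ s → u ≠ w → G.Adj u w := by
    intro s hs u w hu hw hne
    rw [hG]
    refine ⟨hne, hdown s hs {u, w} ?_⟩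
    intro t ht
    rcases Finset.mem_insert.mp ht with h | h
    · subst h; exact hu
    · rw [Finset.mem_singleton] at h; subst h; exact hw
  have hΦgood : ∀ (c : Fin ℓ → Fˣ) (f : Fin ℓ → Fin k),
      (∀ u w, G.Adj u w → f u ≠ f w) →
      IsGood F 𝓕 (fun i => (c i : F) • (Pi.single (f i) (1 : F) : Fin k → F)) := by
    intro c f hf a ha hsum
    obtain ⟨s, hsF, hsne, hsup⟩ := exists_of_mem_coefSet F ha
    obtain ⟨i₀, hi₀⟩ := hsne
    have heval := congrFun hsum (f i₀)
    rw [Finset.sum_apply] at heval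
    simp only [Pi.smul_apply, smul_eq_mul, Pi.zero_apply] at heval
    rw [Finset.sum_eq_single i₀] at heval
    · rw [Pi.single_eq_same, mul_one] at heval
      exact (mul_ne_zero ((hsup i₀).1 hi₀) (c i₀).ne_zero) heval
    · intro b _ hb
      by_cases hbs : b ∈ s
      · have hfb : f b ≠ f i₀ := hf b i₀ (hadj hsF hbs hi₀ hb)
        rw [Pi.single_eq_of_ne (Ne.symm hfb), mul_zero, mul_zero]
      · rw [(hsup b).2 hbs, zero_mul]
    · intro hnot
      exact absurd (Finset.mem_univ i₀) hnot
  have hΦsimple : ∀ (c : Fin ℓ → Fˣ) (f : Fin ℓ → Fin k),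
      IsSimple (fun i => (c i : F) • (Pi.single (f i) (1 : F) : Fin k → F)) := by
    intro c f i
    refine ⟨f i, fun j' hj' => ?_⟩
    by_contra hne
    apply hj'
    simp [Pi.single_eq_of_ne hne]
  let Φ : (Fin ℓ → Fˣ) × {f : Fin ℓ → Fin k // ∀ u w, G.Adj u w → f u ≠ f w} →
      {y : Fin ℓ → Fin k → F // IsGood F 𝓕 y ∧ IsSimple y} :=
    fun p => ⟨fun i => (p.1 i : F) • (Pi.single (p.2.1 i) (1 : F) : Fin k → F),
      hΦgood p.1 p.2.1 p.2.2, hΦsimple p.1 p.2.1⟩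
  have hinj : Function.Injective Φ := by
    rintro ⟨c, f, hf⟩ ⟨c', f', hf'⟩ hpp'
    have h := congrArg Subtype.val hpp'
    have hfeq : ∀ i, f i = f' i := by
      intro i
      by_contra hne
      have h2 := congrFun (congrFun h i) (f i)
      simp only [Φ, Pi.smul_apply, Pi.single_eq_same, smul_eq_mul, mul_one] at h2
      rw [Pi.single_eq_of_ne hne, mul_zero] at h2
      exact (c i).ne_zero h2
    have hceq : ∀ i, c i = c' i := by
      intro i
      have h2 := congrFun (congrFun h i) (f i)
      simp only [Φ, Pi.smul_apply, Pi.single_eq_same, smul_eq_mul, mul_one] at h2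
      rw [hfeq i, Pi.single_eq_same, mul_one] at h2
      exact Units.ext h2
    exact Prod.ext (funext hceq) (Subtype.ext (funext hfeq))
  have hsurj : Function.Surjective Φ := by
    rintro ⟨y, hy⟩
    have hGood := hy.1
    choose jy hjy using id hy.2
    have hne : ∀ i, y i (jy i) ≠ 0 := by
      intro i
      obtain ⟨j', hj'⟩ := Function.ne_iff.mp (good_ne_zero F hsingle hGood i)
      rwa [hjy i j' hj'] at hj'
    have hstruct : ∀ i, y i = (y i (jy i)) • (Pi.single (jy i) (1 : F) : Fin k → F) := by
      intro i
      funext j'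
      by_cases hj : j' = jy i
      · subst hj
        rw [Pi.smul_apply, Pi.single_eq_same, smul_eq_mul, mul_one]
      · rw [Pi.smul_apply, Pi.single_eq_of_ne hj, smul_zero]
        by_contra h0
        exact hj (hjy i j' h0)
    have hproper : ∀ u w, G.Adj u w → jy u ≠ jy w := by
      intro u w huw heq
      have hnuw : u ≠ w := huw.ne
      set a : Fin ℓ → F :=
        fun t => if t = u then y w (jy w) else if t = w then -(y u (jy u)) else 0 with hadef
      have hoff : ∀ t, t ∉ ({u, w} : Finset (Fin ℓ)) → a t = 0 := by
        intro t ht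
        have h1 : t ≠ u := fun h => ht (by rw [h]; exact Finset.mem_insert_self _ _)
        have h2 : t ≠ w := fun h =>
          ht (by rw [h]; exact Finset.mem_insert_of_mem (Finset.mem_singleton_self _))
        simp [hadef, h1, h2]
      have hamem : a ∈ coefSet F 𝓕 := by
        refine mem_coefSet_of F ((hG u w).mp huw).2 (Finset.insert_nonempty _ _)
          (fun t => ⟨?_, hoff t⟩)
        intro ht
        rcases Finset.mem_insert.mp ht with rfl | ht
        · simp [hadef, hne w]
        · rw [Finset.mem_singleton] at ht
          subst ht
          simp [hadef, Ne.symm hnuw, neg_ne_zero, hne u]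
      apply hGood a hamem
      have hsum : ∑ i, a i • y i = a u • y u + a w • y w := by
        rw [← Finset.sum_subset (Finset.subset_univ ({u, w} : Finset (Fin ℓ)))]
        · rw [Finset.sum_pair hnuw]
        · intro t _ ht
          rw [hoff t ht, zero_smul]
      have hau : a u = y w (jy w) := by simp [hadef]
      have haw : a w = -(y u (jy u)) := by simp [hadef, Ne.symm hnuw]
      rw [hsum]
      funext j
      simp only [Pi.add_apply, Pi.smul_apply, smul_eq_mul, Pi.zero_apply, hau, haw]
      by_cases hj : j = jy u
      · subst hj
        rw [← heq]
        ring
      · have h1 : y u j = 0 := by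
          by_contra h0
          exact hj (hjy u j h0)
        have h2 : y w j = 0 := by
          by_contra h0
          exact hj ((hjy w j h0).trans heq.symm)
        rw [h1, h2, mul_zero, mul_zero, add_zero]
    refine ⟨⟨fun i => Units.mk0 (y i (jy i)) (hne i), ⟨jy, hproper⟩⟩, ?_⟩
    apply Subtype.ext
    funext i
    exact (hstruct i).symm
  have ecard : (Finset.univ.filter fun y : Fin ℓ → Fin k → F =>
      IsGood F 𝓕 y ∧ IsSimple y).card
      = Fintype.card ((Fin ℓ → Fˣ) ×
          {f : Fin ℓ → Fin k // ∀ u w, G.Adj u w → f u ≠ f w}) := by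
    rw [← Fintype.card_subtype]
    exact (Fintype.card_congr (Equiv.ofBijective Φ ⟨hinj, hsurj⟩)).symm
  rw [ecard, Fintype.card_prod, Fintype.card_fun, Fintype.card_fin, Fintype.card_units]
  congr 1
  rw [nColorings, Nat.card_eq_fintype_card]

end Aux

/-! ### The group action on non-simple good points -/

/-- The subtype of good non-simple points. -/
def RT (F : Type) [Field F] [Fintype F] {ℓ : ℕ} (k : ℕ)
    (𝓕 : Finset (Finset (Fin ℓ))) : Type :=
  {y : Fin ℓ → Fin k → F // IsGood F 𝓕 y ∧ ¬ IsSimple y}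

section Act

variable {ℓ k : ℕ} (F : Type) [Field F] [Fintype F] (𝓕 : Finset (Finset (Fin ℓ)))

lemma isGood_mul {𝓕 : Finset (Finset (Fin ℓ))} (c : Fin ℓ → Fˣ) (d : Fin k → Fˣ)
    {y : Fin ℓ → Fin k → F} (h : IsGood F 𝓕 y) :
    IsGood F 𝓕 (fun i j => (c i : F) * ((d j : F) * y i j)) := by
  intro a ha
  have ha' : (fun i => a i * (c i : F)) ∈ coefSet F 𝓕 := by
    obtain ⟨s, hs1, hs2, haf⟩ := exists_of_mem_coefSet F ha
    refine mem_coefSet_of F hs1 hs2 (fun i => ⟨?_, ?_⟩)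
    · intro hi
      exact mul_ne_zero ((haf i).1 hi) (c i).ne_zero
    · intro hi
      show a i * (c i : F) = 0
      rw [(haf i).2 hi, zero_mul]
  have h2 := h _ ha'
  rw [Function.ne_iff] at h2 ⊢
  obtain ⟨j, hj⟩ := h2
  refine ⟨j, ?_⟩
  simp only [Finset.sum_apply, Pi.smul_apply, smul_eq_mul, Pi.zero_apply] at hj ⊢
  have heq : (∑ i, a i * ((c i : F) * ((d j : F) * y i j)))
      = (d j : F) * ∑ i, (a i * (c i : F)) * y i j := by
    rw [Finset.mul_sum]
    refine Finset.sum_congr rfl fun i _ => ?_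
    ring
  rw [heq]
  exact mul_ne_zero (d j).ne_zero hj

lemma isSimple_mul_iff (c : Fin ℓ → Fˣ) (d : Fin k → Fˣ) (y : Fin ℓ → Fin k → F) :
    IsSimple (fun i j => (c i : F) * ((d j : F) * y i j)) ↔ IsSimple y := by
  have hpt : ∀ i j', ((c i : F) * ((d j' : F) * y i j') ≠ 0) ↔ y i j' ≠ 0 := by
    intro i j'
    constructor
    · intro h h0
      rw [h0, mul_zero, mul_zero] at h
      exact h rfl
    · intro h
      exact mul_ne_zero (c i).ne_zero (mul_ne_zero (d j').ne_zero h)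
  unfold IsSimple
  refine forall_congr' fun i => exists_congr fun j => forall_congr' fun j' => ?_
  constructor
  · intro h h'
    exact h ((hpt i j').mpr h')
  · intro h h'
    exact h ((hpt i j').mp h')

noncomputable instance : Finite (RT F k 𝓕) := by
  unfold RT; exact Subtype.finite

noncomputable instance : Fintype (RT F k 𝓕) := Fintype.ofFinite _

noncomputable instance actRT :
    MulAction ((Fin ℓ → Fˣ) × (Fin k → Fˣ)) (RT F k 𝓕) where
  smul g y := ⟨fun i j => (g.1 i : F) * ((g.2 j : F) * y.1 i j),
    isGood_mul F g.1 g.2 y.2.1,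
    fun hs => y.2.2 ((isSimple_mul_iff F g.1 g.2 y.1).mp hs)⟩
  one_smul y := Subtype.ext (by
    funext i j
    show ((1 : (Fin ℓ → Fˣ) × (Fin k → Fˣ)).1 i : F) *
        (((1 : (Fin ℓ → Fˣ) × (Fin k → Fˣ)).2 j : F) * y.1 i j) = y.1 i j
    simp)
  mul_smul g h y := Subtype.ext (by
    funext i j
    show ((g.1 * h.1) i : F) * (((g.2 * h.2) j : F) * y.1 i j)
        = (g.1 i : F) * ((g.2 j : F) * ((h.1 i : F) * ((h.2 j : F) * y.1 i j)))
    simp only [Pi.mul_apply, Units.val_mul]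
    ring)

lemma dvd_card_orbits {G α : Type} [Group G] [Fintype G] [MulAction G α] [Fintype α] {n : ℕ}
    (h : ∀ a : α, n ∣ Fintype.card (MulAction.orbit G a)) : n ∣ Fintype.card α := by
  rw [Fintype.card_congr (MulAction.selfEquivSigmaOrbits G α), Fintype.card_sigma]
  exact Finset.dvd_sum fun ω _ => h _

lemma R_card_dvd (hsingle : ∀ i : Fin ℓ, ({i} : Finset (Fin ℓ)) ∈ 𝓕) :
    (Fintype.card F - 1) ^ (ℓ + 1) ∣
      (Finset.univ.filter fun y : Fin ℓ → Fin k → F =>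
        IsGood F 𝓕 y ∧ ¬ IsSimple y).card := by
  rw [← Fintype.card_subtype]
  have hcast : Fintype.card {y : Fin ℓ → Fin k → F // IsGood F 𝓕 y ∧ ¬ IsSimple y}
      = Fintype.card (RT F k 𝓕) := Fintype.card_congr (Equiv.cast rfl)
  rw [hcast]
  apply dvd_card_orbits (G := (Fin ℓ → Fˣ) × (Fin k → Fˣ))
  rintro ⟨y, hGood, hNS⟩
  have hyne : ∀ i, y i ≠ 0 := fun i => good_ne_zero F hsingle hGood i
  have hNS' := hNS
  unfold IsSimple at hNS'
  push_neg at hNS'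
  obtain ⟨i₀, hi₀⟩ := hNS'
  obtain ⟨j₀, hj₀⟩ := Function.ne_iff.mp (hyne i₀)
  obtain ⟨j₁, hj₁ne, hj₁⟩ := hi₀ j₀
  have hk : 0 < k := lt_of_le_of_lt (Nat.zero_le _) j₀.isLt
  have hn₁ : 0 < Fintype.card F - 1 := by
    have : 2 ≤ Fintype.card F := Fintype.one_lt_card
    omega
  set n₁ := Fintype.card F - 1 with hn₁def
  -- the character d ↦ d j₀ * (d j₁)⁻¹
  set χ₂ : (Fin k → Fˣ) →* Fˣ :=
    (Pi.evalMonoidHom (fun _ : Fin k => Fˣ) j₀) *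
      (Pi.evalMonoidHom (fun _ : Fin k => Fˣ) j₁)⁻¹ with hχ₂
  have hχ₂app : ∀ d : Fin k → Fˣ, χ₂ d = d j₀ * (d j₁)⁻¹ := fun d => rfl
  have hχ₂surj : Function.Surjective χ₂ := by
    intro u
    refine ⟨Pi.mulSingle j₀ u, ?_⟩
    rw [hχ₂app, Pi.mulSingle_eq_same, Pi.mulSingle_eq_of_ne hj₁, inv_one, mul_one]
  have hcardunits : Nat.card Fˣ = n₁ := by
    rw [Nat.card_eq_fintype_card, Fintype.card_units, hn₁def]
  have hcardpi : Nat.card (Fin k → Fˣ) = n₁ ^ k := by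
    rw [Nat.card_pi]
    simp only [Nat.card_eq_fintype_card]
    rw [Finset.prod_const, Finset.card_univ, Fintype.card_fin, Fintype.card_units, ← hn₁def]
  have hker : Nat.card χ₂.ker * n₁ = n₁ ^ k := by
    have h1 := Subgroup.card_eq_card_quotient_mul_card_subgroup χ₂.ker
    have h2 : Nat.card ((Fin k → Fˣ) ⧸ χ₂.ker) = n₁ := by
      rw [Nat.card_congr (QuotientGroup.quotientKerEquivRange χ₂).toEquiv,
        MonoidHom.range_eq_top.mpr hχ₂surj, Subgroup.card_top, hcardunits]
    rw [hcardpi, h2] at h1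
    exact (mul_comm _ _).trans h1.symm
  have hkerval : Nat.card χ₂.ker = n₁ ^ (k - 1) := by
    have hpow : n₁ ^ k = n₁ ^ (k - 1) * n₁ := by
      rw [← pow_succ]
      congr 1
      omega
    exact Nat.eq_of_mul_eq_mul_right hn₁ (hker.trans hpow)
  set x : RT F k 𝓕 := ⟨y, hGood, hNS⟩ with hx
  set S := MulAction.stabilizer ((Fin ℓ → Fˣ) × (Fin k → Fˣ)) x with hS
  have hfix : ∀ g : (Fin ℓ → Fˣ) × (Fin k → Fˣ), g ∈ S →
      ∀ i j, (g.1 i : F) * ((g.2 j : F) * y i j) = y i j := by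
    intro g hg i j
    have h1 : g • x = x := hg
    have h2 := congrArg Subtype.val h1
    exact congrFun (congrFun h2 i) j
  have hcd : ∀ g ∈ S, ∀ i j, y i j ≠ 0 → (g.1 i : F) * (g.2 j : F) = 1 := by
    intro g hg i j hyij
    have h1 := hfix g hg i j
    have h2 : ((g.1 i : F) * (g.2 j : F)) * y i j = 1 * y i j := by
      rw [one_mul, mul_assoc]
      exact h1
    exact mul_right_cancel₀ hyij h2
  set π : S →* (Fin k → Fˣ) := (MonoidHom.snd _ _).comp S.subtype with hπ
  have hπapp : ∀ g : S, π g = (g : (Fin ℓ → Fˣ) × (Fin k → Fˣ)).2 := fun g => rfl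
  have hπinj : Function.Injective π := by
    intro g g' hgg'
    rw [hπapp, hπapp] at hgg'
    apply Subtype.ext
    refine Prod.ext ?_ hgg'
    funext i
    obtain ⟨j, hj⟩ := Function.ne_iff.mp (hyne i)
    have h1 := hcd g g.2 i j hj
    have h2 := hcd g' g'.2 i j hj
    have h2' : ((g' : (Fin ℓ → Fˣ) × (Fin k → Fˣ)).1 i : F) *
        ((g : (Fin ℓ → Fˣ) × (Fin k → Fˣ)).2 j : F) = 1 := by
      rw [hgg']
      exact h2
    have hdne : ((g : (Fin ℓ → Fˣ) × (Fin k → Fˣ)).2 j : F) ≠ 0 := Units.ne_zero _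
    exact Units.ext (mul_right_cancel₀ hdne (h1.trans h2'.symm))
  have hrange : π.range ≤ χ₂.ker := by
    rintro d ⟨g, rfl⟩
    rw [MonoidHom.mem_ker, hπapp, hχ₂app]
    have h1 := hcd g g.2 i₀ j₀ hj₀
    have h2 := hcd g g.2 i₀ j₁ hj₁ne
    have hc : ((g : (Fin ℓ → Fˣ) × (Fin k → Fˣ)).1 i₀ : F) ≠ 0 := Units.ne_zero _
    have hdd : (g : (Fin ℓ → Fˣ) × (Fin k → Fˣ)).2 j₀
        = (g : (Fin ℓ → Fˣ) × (Fin k → Fˣ)).2 j₁ := by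
      apply Units.ext
      apply mul_left_cancel₀ hc
      rw [h1, h2]
    rw [hdd, mul_inv_cancel]
  have hstab : Nat.card S ∣ n₁ ^ (k - 1) := by
    rw [← hkerval, Nat.card_congr (MonoidHom.ofInjective hπinj).toEquiv]
    exact Subgroup.card_dvd_of_le hrange
  have horb := MulAction.card_orbit_mul_card_stabilizer_eq_card_group
    ((Fin ℓ → Fˣ) × (Fin k → Fˣ)) x
  have hG' : Fintype.card ((Fin ℓ → Fˣ) × (Fin k → Fˣ)) = n₁ ^ ℓ * n₁ ^ k := by
    rw [Fintype.card_prod, Fintype.card_fun, Fintype.card_fun, Fintype.card_fin,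
      Fintype.card_fin, Fintype.card_units, hn₁def]
  obtain ⟨t, ht⟩ := hstab
  refine ⟨t, ?_⟩
  have hmul : Fintype.card (MulAction.orbit ((Fin ℓ → Fˣ) × (Fin k → Fˣ)) x) * Nat.card S
      = n₁ ^ ℓ * n₁ ^ k := by
    rw [Nat.card_eq_fintype_card, horb, hG']
  have key : Fintype.card (MulAction.orbit ((Fin ℓ → Fˣ) × (Fin k → Fˣ)) x) * n₁ ^ (k - 1)
      = (n₁ ^ (ℓ + 1) * t) * n₁ ^ (k - 1) := by
    calc Fintype.card (MulAction.orbit ((Fin ℓ → Fˣ) × (Fin k → Fˣ)) x) * n₁ ^ (k - 1)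
        = Fintype.card (MulAction.orbit ((Fin ℓ → Fˣ) × (Fin k → Fˣ)) x)
            * (Nat.card S * t) := by rw [← ht]
      _ = (Fintype.card (MulAction.orbit ((Fin ℓ → Fˣ) × (Fin k → Fˣ)) x)
            * Nat.card S) * t := by ring
      _ = (n₁ ^ ℓ * n₁ ^ k) * t := by rw [hmul]
      _ = (n₁ ^ (ℓ + 1) * t) * n₁ ^ (k - 1) := by
          rw [← pow_add, mul_right_comm, ← pow_add]
          congr 2
          omega
  exact Nat.eq_of_mul_eq_mul_right (pow_pos hn₁ _) key

end Act

/-- Let `q` be a prime power (i.e. the cardinality of a finite field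
`F`), `Δ` a simplicial complex on `{1,…,ℓ}` containing every singleton, and `G` its
underlying graph.  Then for every `k ∈ ℕ`, `(q−1)^ℓ` divides `χ(S_Δ^q, q^k)` and the
quotient is congruent to the number of proper `k`-colorings of `G` modulo `q−1`. -/
theorem stmt0 (ℓ : ℕ) (F : Type) [Field F] [Fintype F] (q : ℕ)
    (hq : Fintype.card F = q)
    (𝓕 : Finset (Finset (Fin ℓ)))
    (hdown : ∀ s ∈ 𝓕, ∀ t ⊆ s, t ∈ 𝓕)
    (hsingle : ∀ i : Fin ℓ, ({i} : Finset (Fin ℓ)) ∈ 𝓕)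
    (G : SimpleGraph (Fin ℓ))
    (hG : ∀ i j : Fin ℓ, G.Adj i j ↔ i ≠ j ∧ ({i, j} : Finset (Fin ℓ)) ∈ 𝓕)
    (k : ℕ) :
    ∃ m : ℤ,
      chi (SArr F 𝓕) ((q : ℤ) ^ k) = ((q : ℤ) - 1) ^ ℓ * m ∧
        m ≡ (nColorings G k : ℤ) [ZMOD ((q : ℤ) - 1)] := by
  subst hq
  have hc2 : 2 ≤ Fintype.card F := Fintype.one_lt_card
  have hsplit :
      (Finset.univ.filter fun y : Fin ℓ → Fin k → F => IsGood F 𝓕 y).card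
        = (Finset.univ.filter fun y : Fin ℓ → Fin k → F =>
            IsGood F 𝓕 y ∧ IsSimple y).card
          + (Finset.univ.filter fun y : Fin ℓ → Fin k → F =>
            IsGood F 𝓕 y ∧ ¬ IsSimple y).card := by
    rw [← Finset.filter_filter, ← Finset.filter_filter]
    exact (Finset.card_filter_add_card_filter_not (fun y => IsSimple y)).symm
  obtain ⟨r, hr⟩ := R_card_dvd F 𝓕 hsingle (k := k)
  have hcount := count_simple F 𝓕 hdown hsingle G hG (k := k)
  have hchi := whitney F 𝓕 (k := k)
  have hcast : ((Fintype.card F - 1 : ℕ) : ℤ) = (Fintype.card F : ℤ) - 1 := by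
    have h1 : (1 : ℕ) ≤ Fintype.card F := by omega
    push_cast [h1]
    ring
  refine ⟨(nColorings G k : ℤ) + ((Fintype.card F : ℤ) - 1) * r, ?_, ?_⟩
  · have hnat : (Fintype.card F - 1) ^ ℓ * nColorings G k
        + (Fintype.card F - 1) ^ (ℓ + 1) * r
        = (Fintype.card F - 1) ^ ℓ * (nColorings G k + (Fintype.card F - 1) * r) := by
      ring
    rw [hchi, hsplit, hcount, hr, ← hcast]
    exact_mod_cast congrArg (fun n : ℕ => (n : ℤ)) hnat
  · exact Int.modEq_iff_dvd.mpr ⟨-r, by ring⟩
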